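/- In a conic idempotent residuated lattice, if two elements x and y do not commute (x·y ≠ y·x), then x^* = y and y^* = x (where z^* := z^ℓ ∨ z^r), and the set {x, y} forms either a left-zero semigroup (x·y = x and y·x = y) or a right-zero semigroup (x·y = y and y·x = x). -/
import Mathlib

section helpers

variable {A : Type*} [Lattice A] [Monoid A] {ld rd : A → A → A}

private lemma monoR (resl : ∀ x y z : A, x * y ≤ z ↔ y ≤ ld x z)
    {p q q' : A} (h : q ≤ q') : p * q ≤ p * q' :=
  (resl p q _).mpr (h.trans ((resl p q' (p * q')).mp le_rfl))

private lemma monoL (resr : ∀ x y z : A, x * y ≤ z ↔ x ≤ rd z y)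
    {p p' q : A} (h : p ≤ p') : p * q ≤ p' * q :=
  (resr p q _).mpr (h.trans ((resr p' q (p' * q)).mp le_rfl))

private lemma negmul (resl : ∀ x y z : A, x * y ≤ z ↔ y ≤ ld x z)
    (resr : ∀ x y z : A, x * y ≤ z ↔ x ≤ rd z y)
    (idem : ∀ x : A, x * x = x)
    {p q : A} (hp : p ≤ 1) (hq : q ≤ 1) : p * q = p ⊓ q := by
  apply le_antisymm
  · refine le_inf ?_ ?_
    · have := monoR resl hq (p := p); rwa [mul_one] at this
    · have := monoL resr hp (q := q); rwa [one_mul] at this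
  · calc p ⊓ q = (p ⊓ q) * (p ⊓ q) := (idem _).symm
      _ ≤ p * q := le_trans (monoL resr inf_le_left) (monoR resl inf_le_right)

private lemma posmul (resl : ∀ x y z : A, x * y ≤ z ↔ y ≤ ld x z)
    (resr : ∀ x y z : A, x * y ≤ z ↔ x ≤ rd z y)
    (idem : ∀ x : A, x * x = x)
    {p q : A} (hp : 1 ≤ p) (hq : 1 ≤ q) : p * q = p ⊔ q := by
  apply le_antisymm
  · calc p * q ≤ (p ⊔ q) * (p ⊔ q) :=
        le_trans (monoL resr le_sup_left) (monoR resl le_sup_right)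
      _ = p ⊔ q := idem _
  · refine sup_le ?_ ?_
    · have := monoR resl hq (p := p); rwa [mul_one] at this
    · have := monoL resr hp (q := q); rwa [one_mul] at this

private lemma ab_neg (resl : ∀ x y z : A, x * y ≤ z ↔ y ≤ ld x z)
    (idem : ∀ x : A, x * x = x)
    {a b : A} (hb : 1 ≤ b) (h : a * b ≤ 1) : a * b = a := by
  apply le_antisymm
  · have := monoR resl h (p := a)
    rwa [← mul_assoc, idem, mul_one] at this
  · have := monoR resl hb (p := a); rwa [mul_one] at this

private lemma ab_pos (resl : ∀ x y z : A, x * y ≤ z ↔ y ≤ ld x z)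
    (resr : ∀ x y z : A, x * y ≤ z ↔ x ≤ rd z y)
    (idem : ∀ x : A, x * x = x)
    {a b : A} (ha : a ≤ 1) (h : 1 ≤ a * b) : a * b = b := by
  apply le_antisymm
  · have := monoL resr ha (q := b); rwa [one_mul] at this
  · have := monoL resr h (q := b)
    rwa [one_mul, mul_assoc, idem] at this

private lemma ba_neg (resl : ∀ x y z : A, x * y ≤ z ↔ y ≤ ld x z)
    (resr : ∀ x y z : A, x * y ≤ z ↔ x ≤ rd z y)
    (idem : ∀ x : A, x * x = x)
    {a b : A} (hb : 1 ≤ b) (h : b * a ≤ 1) : b * a = a := by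
  apply le_antisymm
  · have := monoL resr h (q := a)
    rwa [one_mul, mul_assoc, idem] at this
  · have := monoL resr hb (q := a); rwa [one_mul] at this

private lemma ba_pos (resl : ∀ x y z : A, x * y ≤ z ↔ y ≤ ld x z)
    (idem : ∀ x : A, x * x = x)
    {a b : A} (ha : a ≤ 1) (h : 1 ≤ b * a) : b * a = b := by
  apply le_antisymm
  · have := monoR resl ha (p := b); rwa [mul_one] at this
  · have := monoR resl h (p := b)
    rwa [mul_one, ← mul_assoc, idem] at this

private lemma mul_sup_right (resl : ∀ x y z : A, x * y ≤ z ↔ y ≤ ld x z)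
    (resr : ∀ x y z : A, x * y ≤ z ↔ x ≤ rd z y)
    (p q r : A) : (p ⊔ q) * r = p * r ⊔ q * r := by
  apply le_antisymm
  · refine (resr _ _ _).mpr (sup_le ?_ ?_)
    · exact (resr p r _).mp le_sup_left
    · exact (resr q r _).mp le_sup_right
  · exact sup_le (monoL resr le_sup_left) (monoL resr le_sup_right)

private lemma mul_sup_left (resl : ∀ x y z : A, x * y ≤ z ↔ y ≤ ld x z)
    (resr : ∀ x y z : A, x * y ≤ z ↔ x ≤ rd z y)
    (p q r : A) : p * (q ⊔ r) = p * q ⊔ p * r := by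
  apply le_antisymm
  · refine (resl _ _ _).mpr (sup_le ?_ ?_)
    · exact (resl p q _).mp le_sup_left
    · exact (resl p r _).mp le_sup_right
  · exact sup_le (monoR resl le_sup_left) (monoR resl le_sup_right)

private lemma key (resl : ∀ x y z : A, x * y ≤ z ↔ y ≤ ld x z)
    (resr : ∀ x y z : A, x * y ≤ z ↔ x ≤ rd z y)
    (conic : ∀ a : A, a ≤ 1 ∨ 1 ≤ a)
    (idem : ∀ x : A, x * x = x)
    {x y : A} (hx : x ≤ 1) (hy : 1 ≤ y) (hne : x * y ≠ y * x) :
    rd 1 x ⊔ ld x 1 = y ∧ rd 1 y ⊔ ld y 1 = x ∧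
      ((x * y = x ∧ y * x = y) ∨ (x * y = y ∧ y * x = x)) := by
  have hy1 : y ≠ 1 := by
    rintro rfl; exact hne (by rw [mul_one, one_mul])
  have hxycase : x * y = x ∨ x * y = y := by
    rcases conic (x * y) with h | h
    · exact Or.inl (ab_neg resl idem hy h)
    · exact Or.inr (ab_pos resl resr idem hx h)
  have hyxcase : y * x = x ∨ y * x = y := by
    rcases conic (y * x) with h | h
    · exact Or.inl (ba_neg resl resr idem hy h)
    · exact Or.inr (ba_pos resl idem hx h)
  rcases hxycase with hxy | hxy <;> rcases hyxcase with hyx | hyx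
  · exact absurd (hxy.trans hyx.symm) hne
  · -- case (i): x*y = x, y*x = y
    refine ⟨?_, ?_, Or.inl ⟨hxy, hyx⟩⟩
    · -- rd 1 x ⊔ ld x 1 = y
      have hylz : y ≤ ld x 1 := (resl x y 1).mp (hxy.trans_le hx)
      have hz : x * ld x 1 ≤ 1 := (resl x _ 1).mpr le_rfl
      have hzy : ld x 1 ≤ y := by
        rcases conic (ld x 1) with h1 | h1
        · exact h1.trans hy
        · have hxz : x * ld x 1 = x := ab_neg resl idem h1 hz
          have h2 : y * ld x 1 = y := by
            calc y * ld x 1 = (y * x) * ld x 1 := by rw [hyx]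
              _ = y * (x * ld x 1) := mul_assoc _ _ _
              _ = y * x := by rw [hxz]
              _ = y := hyx
          calc ld x 1 ≤ y ⊔ ld x 1 := le_sup_right
            _ = y * ld x 1 := (posmul resl resr idem hy h1).symm
            _ = y := h2
      have hwy : rd 1 x ≤ y := by
        have hw : rd 1 x * x ≤ 1 := (resr _ x 1).mpr le_rfl
        rcases conic (rd 1 x) with h1 | h1
        · exact h1.trans hy
        · have h2 : (rd 1 x * y) * x = y := by
            rw [posmul resl resr idem h1 hy, mul_sup_right resl resr, hyx]
            exact sup_eq_right.mpr (hw.trans hy)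
          have h3 : rd 1 x * (y * x) = rd 1 x ⊔ y := by
            rw [hyx, posmul resl resr idem h1 hy]
          have h4 : rd 1 x ⊔ y = y := by rw [← h3, ← mul_assoc, h2]
          exact le_sup_left.trans h4.le
      exact le_antisymm (sup_le hwy hzy) (hylz.trans le_sup_right)
    · -- rd 1 y ⊔ ld y 1 = x
      have hxw : x ≤ rd 1 y := (resr x y 1).mp (hxy.trans_le hx)
      have hw : rd 1 y * y ≤ 1 := (resr _ y 1).mpr le_rfl
      have hwneg : rd 1 y ≤ 1 := by
        rcases conic (rd 1 y) with h | h
        · exact h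
        · exfalso
          rw [posmul resl resr idem h hy] at hw
          exact hy1 (le_antisymm (le_sup_right.trans hw) hy)
      have hwx : rd 1 y ≤ x := by
        have h1 : rd 1 y ≤ rd 1 y * y := by
          have := monoR resl hy (p := rd 1 y); rwa [mul_one] at this
        have h2 : rd 1 y * y ≤ x := by
          have h3 : (rd 1 y * y) * x = rd 1 y * y := by rw [mul_assoc, hyx]
          have h4 := monoL resr hw (q := x)
          rwa [h3, one_mul] at h4
        exact h1.trans h2
      have hrd : rd 1 y = x := le_antisymm hwx hxw
      have hz'x : ld y 1 ≤ x := by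
        have hz' : y * ld y 1 ≤ 1 := (resl y _ 1).mpr le_rfl
        have hz'neg : ld y 1 ≤ 1 := by
          rcases conic (ld y 1) with h | h
          · exact h
          · exfalso
            rw [posmul resl resr idem hy h] at hz'
            exact hy1 (le_antisymm (le_sup_left.trans hz') hy)
        rcases conic (ld y 1 * y) with h | h
        · exact hrd ▸ (resr _ y 1).mp h
        · exfalso
          have hz'y : ld y 1 * y = y := ab_pos resl resr idem hz'neg h
          have hyz' : y * ld y 1 = ld y 1 := ba_neg resl resr idem hy hz'
          have hcm : ld y 1 * x = x * ld y 1 := by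
            rw [negmul resl resr idem hz'neg hx, negmul resl resr idem hx hz'neg,
              inf_comm]
          have hym : y * (x * ld y 1) = x * ld y 1 := by
            rw [← hcm, ← mul_assoc, hyz']
          have hmy : (x * ld y 1) * y = x := by rw [mul_assoc, hz'y, hxy]
          have hxeqy : x = y := by
            have a1 : (y * (x * ld y 1)) * y = x := by rw [hym, hmy]
            have a2 : y * ((x * ld y 1) * y) = y := by rw [hmy, hyx]
            rw [mul_assoc] at a1
            exact a1.symm.trans a2
          exact hne (by rw [hxeqy])
      exact le_antisymm (sup_le hrd.le hz'x) (hrd ▸ le_sup_left)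
  · -- case (ii): x*y = y, y*x = x
    refine ⟨?_, ?_, Or.inr ⟨hxy, hyx⟩⟩
    · -- rd 1 x ⊔ ld x 1 = y
      have hyw : y ≤ rd 1 x := (resr y x 1).mp (hyx.trans_le hx)
      have hw : rd 1 x * x ≤ 1 := (resr _ x 1).mpr le_rfl
      have hwy : rd 1 x ≤ y := by
        rcases conic (rd 1 x) with h1 | h1
        · exact h1.trans hy
        · have hwx : rd 1 x * x = x := ba_neg resl resr idem h1 hw
          have h2 : rd 1 x * y = y := by
            calc rd 1 x * y = rd 1 x * (x * y) := by rw [hxy]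
              _ = (rd 1 x * x) * y := (mul_assoc _ _ _).symm
              _ = x * y := by rw [hwx]
              _ = y := hxy
          calc rd 1 x ≤ rd 1 x ⊔ y := le_sup_left
            _ = rd 1 x * y := (posmul resl resr idem h1 hy).symm
            _ = y := h2
      have hzy : ld x 1 ≤ y := by
        have hz : x * ld x 1 ≤ 1 := (resl x _ 1).mpr le_rfl
        rcases conic (ld x 1) with h1 | h1
        · exact h1.trans hy
        · have h2 : x * (y * ld x 1) = y := by
            rw [posmul resl resr idem hy h1, mul_sup_left resl resr, hxy]
            exact sup_eq_left.mpr (hz.trans hy)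
          have h3 : (x * y) * ld x 1 = y ⊔ ld x 1 := by
            rw [hxy, posmul resl resr idem hy h1]
          have h4 : y ⊔ ld x 1 = y := by rw [← h3, mul_assoc, h2]
          exact le_sup_right.trans h4.le
      exact le_antisymm (sup_le hwy hzy) (hyw.trans le_sup_left)
    · -- rd 1 y ⊔ ld y 1 = x
      have hxz : x ≤ ld y 1 := (resl y x 1).mp (hyx.trans_le hx)
      have hz : y * ld y 1 ≤ 1 := (resl y _ 1).mpr le_rfl
      have hzneg : ld y 1 ≤ 1 := by
        rcases conic (ld y 1) with h | h
        · exact h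
        · exfalso
          rw [posmul resl resr idem hy h] at hz
          exact hy1 (le_antisymm (le_sup_left.trans hz) hy)
      have hzx : ld y 1 ≤ x := by
        have h1 : ld y 1 ≤ y * ld y 1 := by
          have := monoL resr hy (q := ld y 1); rwa [one_mul] at this
        have h2 : y * ld y 1 ≤ x := by
          have h3 : x * (y * ld y 1) = y * ld y 1 := by rw [← mul_assoc, hxy]
          have h4 := monoR resl hz (p := x)
          rwa [h3, mul_one] at h4
        exact h1.trans h2
      have hld : ld y 1 = x := le_antisymm hzx hxz
      have hw'x : rd 1 y ≤ x := by
        have hw' : rd 1 y * y ≤ 1 := (resr _ y 1).mpr le_rfl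
        have hw'neg : rd 1 y ≤ 1 := by
          rcases conic (rd 1 y) with h | h
          · exact h
          · exfalso
            rw [posmul resl resr idem h hy] at hw'
            exact hy1 (le_antisymm (le_sup_right.trans hw') hy)
        rcases conic (y * rd 1 y) with h | h
        · exact hld ▸ (resl y _ 1).mp h
        · exfalso
          have hyw' : y * rd 1 y = y := ba_pos resl idem hw'neg h
          have hw'y : rd 1 y * y = rd 1 y := ab_neg resl idem hy hw'
          have hcm : rd 1 y * x = x * rd 1 y := by
            rw [negmul resl resr idem hw'neg hx, negmul resl resr idem hx hw'neg,
              inf_comm]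
          have hmy : (x * rd 1 y) * y = x * rd 1 y := by
            rw [mul_assoc, hw'y]
          have hym : y * (x * rd 1 y) = x := by
            rw [← hcm, ← mul_assoc, hyw', hyx]
          have hxeqy : x = y := by
            have a1 : y * ((x * rd 1 y) * y) = x := by rw [hmy, hym]
            have a2 : (y * (x * rd 1 y)) * y = y := by rw [hym, hxy]
            rw [mul_assoc] at a2
            exact a1.symm.trans a2
          exact hne (by rw [hxeqy])
      exact le_antisymm (sup_le hw'x hld.le) (hld ▸ le_sup_right)
  · exact absurd (hxy.trans hyx.symm) hne

end helpers

/-- In a conic idempotent residuated lattice, if `x` and `y` do not commute, then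
`x^* = y`, `y^* = x` (where `z^* = z^ℓ ∨ z^r`) and `{x,y}` forms a left-zero or a
right-zero semigroup. -/
theorem stmt3 {A : Type*} [Lattice A] [Monoid A]
    (ld rd : A → A → A)
    (resl : ∀ x y z : A, x * y ≤ z ↔ y ≤ ld x z)
    (resr : ∀ x y z : A, x * y ≤ z ↔ x ≤ rd z y)
    (conic : ∀ a : A, a ≤ 1 ∨ 1 ≤ a)
    (idem : ∀ x : A, x * x = x) :
    ∀ x y : A, x * y ≠ y * x →
      (rd 1 x ⊔ ld x 1 = y ∧ rd 1 y ⊔ ld y 1 = x ∧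
        ((x * y = x ∧ y * x = y) ∨ (x * y = y ∧ y * x = x))) := by
  intro x y hne
  rcases conic x with hx | hx <;> rcases conic y with hy | hy
  · exact absurd (by rw [negmul resl resr idem hx hy,
      negmul resl resr idem hy hx, inf_comm]) hne
  · exact key resl resr conic idem hx hy hne
  · obtain ⟨h1, h2, h3⟩ := key resl resr conic idem hy hx (fun h => hne h.symm)
    exact ⟨h2, h1, by tauto⟩
  · exact absurd (by rw [posmul resl resr idem hx hy,
      posmul resl resr idem hy hx, sup_comm]) hne
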